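/- (Section 7.2, counterexample) Let A = {3^n + n : n ∈ ℕ, n ≥ 1} and B = {−3^n : n ∈ ℕ, n ≥ 1}. Define w : ℤ → ℝ by w(x) = exp(−x²) if x ∈ A ∪ B and w(x) = exp(−10^{10^{|x|}}) otherwise, let Z = Σ_{x ∈ ℤ} w(x) (which is finite) and p_X(x) = w(x)/Z. Then p_X is a probability mass function on ℤ, positive everywhere, satisfying p_X(x) ≤ Z^{−1}·e^{−x²}, and for every choice of a, c, C > 0 there exists z ∈ ℤ with P(X₁ + X₂ = z) > 0 such that E[ e^{a·|X₁|} | X₁ + X₂ = z ] ≥ C · e^{c·z²}, where X₁, X₂ are i.i.d. with probability mass function p_X. -/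

import Mathlib

open MeasureTheory Real Set Filter
open scoped ENNReal NNReal

noncomputable section

/-- The set `A = {3^n + n : n ≥ 1}` of spike locations on the positive side. -/
def spikeA (x : ℤ) : Prop := ∃ n : ℕ, 1 ≤ n ∧ x = 3 ^ n + n

/-- The set `B = {−3^n : n ≥ 1}` of spike locations on the negative side. -/
def spikeB (x : ℤ) : Prop := ∃ n : ℕ, 1 ≤ n ∧ x = -(3 ^ n : ℤ)

open scoped Classical in
/-- The weight function `w(x) = e^{−x²}` on `A ∪ B` and `w(x) = e^{−g(x)}`,
`g(x) = 10^{10^{|x|}}`, elsewhere. -/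
def wfun (x : ℤ) : ℝ :=
  if spikeA x ∨ spikeB x then Real.exp (-(x : ℝ) ^ 2)
  else Real.exp (-((10 : ℝ) ^ ((10 : ℝ) ^ x.natAbs)))

/-- The normalizing constant `Z = Σ_{x ∈ ℤ} w(x)`. -/
def Zw : ℝ := ∑' x : ℤ, wfun x

/-- The probability mass function `p_X(x) = w(x)/Z`. -/
def pCtr (x : ℤ) : ℝ := wfun x / Zw

end


namespace Sec72

lemma two_mul_le_pow10 (t : ℕ) : 2 * t ≤ 10 ^ t := by
  induction t with
  | zero => norm_num
  | succ t ih =>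
    have h1 : (1:ℕ) ≤ 10 ^ t := Nat.one_le_two_pow.trans (Nat.pow_le_pow_left (by norm_num) t)
    have e : (10:ℕ) ^ (t+1) = 10 ^ t * 10 := pow_succ 10 t
    omega

lemma sq_le_pow10pow10 (t : ℕ) : t ^ 2 ≤ 10 ^ (10 ^ t) := by
  have h1 : t ≤ 10 ^ t := (Nat.lt_pow_self (by norm_num : 1 < 10) : t < 10 ^ t).le
  calc t ^ 2 ≤ (10 ^ t) ^ 2 := Nat.pow_le_pow_left h1 2
  _ = 10 ^ (2 * t) := by rw [← pow_mul, mul_comm]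
  _ ≤ 10 ^ (10 ^ t) := Nat.pow_le_pow_right (by norm_num) (two_mul_le_pow10 t)

lemma three_pow_add (t : ℕ) (ht : 1 ≤ t) : 3 ^ t + t + 2 ≤ 10 ^ t := by
  induction t with
  | zero => omega
  | succ t ih =>
    by_cases h0 : t = 0
    · subst h0; norm_num
    · have ih' := ih (by omega)
      have e1 : (3:ℕ) ^ (t+1) = 3 ^ t * 3 := pow_succ 3 t
      have e2 : (10:ℕ) ^ (t+1) = 10 ^ t * 10 := pow_succ 10 t
      omega

lemma keyF {k t : ℕ} (hk : 1 ≤ k) (hkt : k ≤ t) : 7 * 9 ^ (3 ^ k) + 2 * t ≤ 10 ^ (10 ^ t) := by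
  have h1 : 7 * 9 ^ (3 ^ k) ≤ 10 ^ (3 ^ k + 1) := by
    have e1 : (9:ℕ) ^ (3^k + 1) = 9 ^ (3^k) * 9 := pow_succ 9 _
    have e2 : (9:ℕ) ^ (3^k+1) ≤ 10 ^ (3^k+1) := Nat.pow_le_pow_left (by norm_num) _
    omega
  have h2 : 2 * t ≤ 10 ^ t := two_mul_le_pow10 t
  have hexp : 3 ^ k + t + 2 ≤ 10 ^ t := by
    have e1 : (3:ℕ) ^ k ≤ 3 ^ t := Nat.pow_le_pow_right (by norm_num) hkt
    have e2 := three_pow_add t (hk.trans hkt)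
    omega
  have h3 : 10 ^ (3 ^ k + 1) + 10 ^ t ≤ 10 ^ (3 ^ k + t + 2) := by
    have b1 : (10:ℕ) ^ (3^k+1) ≤ 10 ^ (3^k+t+1) :=
      Nat.pow_le_pow_right (by norm_num) (Nat.add_le_add_right (Nat.le_add_right (3^k) t) 1)
    have b2 : (10:ℕ) ^ t ≤ 10 ^ (3^k+t+1) :=
      Nat.pow_le_pow_right (by norm_num) ((Nat.le_add_left t (3^k)).trans (Nat.le_succ _))
    have e : (10:ℕ) ^ (3^k+t+2) = 10 ^ (3^k+t+1) * 10 := pow_succ 10 _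
    omega
  have h4 : (10:ℕ) ^ (3^k+t+2) ≤ 10 ^ (10 ^ t) := Nat.pow_le_pow_right (by norm_num) hexp
  omega

lemma four_mul_le {n : ℕ} (hn : 3 ≤ n) : 4 * n ≤ 3 ^ n := by
  induction n with
  | zero => omega
  | succ n ih =>
    by_cases h : 3 ≤ n
    · have := ih h
      have e : (3:ℕ) ^ (n+1) = 3 ^ n * 3 := pow_succ 3 n
      omega
    · have : n = 2 := by omega
      subst this; norm_num

lemma le_pow3 (n : ℕ) : n ≤ 3 ^ n := (Nat.lt_pow_self (by norm_num : 1 < 3) : n < 3 ^ n).le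

lemma lemG {n : ℕ} (hn : 4 ≤ n) : (3 ^ n + n) ^ 2 + 9 ^ n ≤ 3 * 9 ^ n := by
  have h1 : 4 * n ≤ 3 ^ n := four_mul_le (by omega)
  have h3 : n ≤ 3 ^ n := le_pow3 n
  have h2 : (9:ℕ) ^ n = 3 ^ n * 3 ^ n := by
    rw [show (9:ℕ) = 3^2 by norm_num, ← pow_mul, two_mul, pow_add]
  nlinarith [Nat.mul_le_mul_right (3^n) h1, Nat.mul_le_mul_right n h3]

lemma two_mul_lt_pow3 {m : ℕ} (hm : 1 ≤ m) : 2 * m < 3 ^ m := by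
  induction m with
  | zero => omega
  | succ m ih =>
    by_cases h0 : m = 0
    · subst h0; norm_num
    · have := ih (by omega)
      have e : (3:ℕ) ^ (m+1) = 3 ^ m * 3 := pow_succ 3 m
      omega

lemma mul_nine_le {k : ℕ} (hk : 1 ≤ k) : k * 9 ^ k ≤ 3 ^ (3 ^ k) := by
  have h1 : 3 * k ≤ 3 ^ k := by
    induction k with
    | zero => omega
    | succ k ih =>
      by_cases h0 : k = 0
      · subst h0; norm_num
      · have := ih (by omega)
        have e : (3:ℕ) ^ (k+1) = 3 ^ k * 3 := pow_succ 3 k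
        omega
  calc k * 9 ^ k ≤ 3 ^ k * 9 ^ k := Nat.mul_le_mul_right _ (le_pow3 k)
  _ = 27 ^ k := by rw [← Nat.mul_pow]
  _ = 3 ^ (3 * k) := by rw [pow_mul]; norm_num
  _ ≤ 3 ^ (3 ^ k) := Nat.pow_le_pow_right (by norm_num) h1


lemma wfun_pos (x : ℤ) : 0 < wfun x := by
  unfold wfun; split <;> exact Real.exp_pos _

lemma wfun_spike {x : ℤ} (h : spikeA x ∨ spikeB x) : wfun x = Real.exp (-(x : ℝ) ^ 2) := by
  unfold wfun; rw [if_pos h]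

lemma wfun_nonspike {x : ℤ} (h : ¬(spikeA x ∨ spikeB x)) :
    wfun x = Real.exp (-((10 ^ 10 ^ x.natAbs : ℕ) : ℝ)) := by
  unfold wfun; rw [if_neg h]
  congr 1
  rw [neg_inj]
  rw [show ((10:ℝ) ^ x.natAbs) = (((10 ^ x.natAbs : ℕ) : ℝ)) by push_cast; ring]
  rw [Real.rpow_natCast]
  push_cast
  ring

lemma cast_sq_natAbs (x : ℤ) : ((x.natAbs ^ 2 : ℕ) : ℝ) = (x : ℝ) ^ 2 := by
  push_cast [Nat.cast_natAbs]
  rw [sq_abs]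

lemma wfun_le_exp_neg_sq (x : ℤ) : wfun x ≤ Real.exp (-(x : ℝ) ^ 2) := by
  by_cases h : spikeA x ∨ spikeB x
  · rw [wfun_spike h]
  · rw [wfun_nonspike h]
    apply Real.exp_le_exp.2
    rw [neg_le_neg_iff, ← cast_sq_natAbs x]
    exact_mod_cast sq_le_pow10pow10 x.natAbs

lemma wfun_le_exp_neg_natAbs (x : ℤ) : wfun x ≤ Real.exp (-(x.natAbs : ℝ)) := by
  refine (wfun_le_exp_neg_sq x).trans (Real.exp_le_exp.2 ?_)
  rw [neg_le_neg_iff, ← cast_sq_natAbs x]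
  have : (x.natAbs : ℕ) ≤ x.natAbs ^ 2 := Nat.le_self_pow (by norm_num) _
  exact_mod_cast this

lemma wfun_le_one (x : ℤ) : wfun x ≤ 1 := by
  refine (wfun_le_exp_neg_natAbs x).trans ?_
  rw [← Real.exp_zero]
  apply Real.exp_le_exp.2; simp [Nat.cast_nonneg]

lemma exp_pow_natAbs (t : ℕ) : Real.exp (-1) ^ t = Real.exp (-(t:ℝ)) := by
  rw [← Real.exp_nat_mul]; congr 1; ring

lemma hasSum_geom_int {r : ℝ} (h0 : 0 ≤ r) (h1 : r < 1) :
    HasSum (fun j : ℤ => r ^ j.natAbs) ((1 + r) / (1 - r)) := by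
  have hr : (0:ℝ) < 1 - r := by linarith
  have hpos : HasSum (fun n : ℕ => r ^ (n:ℤ).natAbs) ((1-r)⁻¹) := by
    have h := hasSum_geometric_of_lt_one h0 h1
    have e : (fun n : ℕ => r ^ (n:ℤ).natAbs) = fun n : ℕ => r ^ n := by
      funext n; rw [Int.natAbs_natCast]
    rw [e]; exact h
  have hneg : HasSum (fun n : ℕ => r ^ ((-((n:ℤ)+1))).natAbs) (r * (1-r)⁻¹) := by
    have h := (hasSum_geometric_of_lt_one h0 h1).mul_left r
    have e : (fun n : ℕ => r ^ ((-((n:ℤ)+1))).natAbs) = fun n : ℕ => r * r ^ n := by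
      funext n
      have hn : ((-((n:ℤ)+1))).natAbs = n + 1 := by omega
      rw [hn, pow_succ]; ring
    rw [e]; exact h
  have h := HasSum.of_nat_of_neg_add_one (f := fun j : ℤ => r ^ j.natAbs) hpos hneg
  have e2 : (1+r)/(1-r) = (1-r)⁻¹ + r * (1-r)⁻¹ := by
    field_simp
  rw [e2]
  exact h

lemma summable_geom_int {r : ℝ} (h0 : 0 ≤ r) (h1 : r < 1) :
    Summable (fun j : ℤ => r ^ j.natAbs) := (hasSum_geom_int h0 h1).summable

lemma exp_neg_one_lt : Real.exp (-1) < 1 := by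
  rw [Real.exp_lt_one_iff]; norm_num

lemma exp_neg_one_le_half : Real.exp (-1) ≤ 1/2 := by
  rw [Real.exp_neg]
  rw [inv_le_comm₀ (Real.exp_pos 1) (by norm_num)]
  have := Real.add_one_le_exp 1
  linarith

lemma tsum_geom_int_le_three :
    (∑' j : ℤ, Real.exp (-1) ^ j.natAbs) ≤ 3 := by
  rw [(hasSum_geom_int (Real.exp_pos (-1)).le exp_neg_one_lt).tsum_eq]
  rw [div_le_iff₀ (by linarith [exp_neg_one_lt] : (0:ℝ) < 1 - Real.exp (-1))]
  have := exp_neg_one_le_half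
  linarith

lemma summable_wfun : Summable wfun := by
  refine Summable.of_nonneg_of_le (fun x => (wfun_pos x).le) (fun x => ?_)
    (summable_geom_int (Real.exp_pos (-1)).le exp_neg_one_lt)
  rw [exp_pow_natAbs]
  exact wfun_le_exp_neg_natAbs x

lemma Zw_pos : 0 < Zw :=
  Summable.tsum_pos summable_wfun (fun x => (wfun_pos x).le) 0 (wfun_pos 0)

lemma pCtr_pos (x : ℤ) : 0 < pCtr x := div_pos (wfun_pos x) Zw_pos

lemma tsum_pCtr : (∑' x : ℤ, pCtr x) = 1 := by
  unfold pCtr Zw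
  rw [tsum_div_const]
  exact div_self (ne_of_gt Zw_pos)

lemma pCtr_le (x : ℤ) : pCtr x ≤ Zw⁻¹ * Real.exp (-(x : ℝ) ^ 2) := by
  unfold pCtr
  rw [div_eq_inv_mul]
  exact mul_le_mul_of_nonneg_left (wfun_le_exp_neg_sq x) (inv_nonneg.2 Zw_pos.le)


/-- Equation `3^m + m = 3^k + 3^l` forces `m = l = 3^k`... wait it forces `m = 3^k`?? -/
lemma eqAB {k m l : ℕ} (hk : 6 ≤ k) (hke : k % 2 = 0) (hm : 1 ≤ m) (hl : 1 ≤ l)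
    (heq : 3 ^ m + m = 3 ^ k + 3 ^ l) : m = 3 ^ k ∧ l = m := by
  rcases lt_trichotomy m l with h | h | h
  · -- m < l : LHS too small
    exfalso
    have h1 : (3:ℕ) ^ m * 3 ≤ 3 ^ l := by
      calc (3:ℕ)^m * 3 = 3 ^ (m+1) := (pow_succ 3 m).symm
      _ ≤ 3 ^ l := Nat.pow_le_pow_right (by norm_num) h
    have h2 : m < 3 ^ m := Nat.lt_pow_self (by norm_num : 1 < 3)
    have h3 : 0 < 3 ^ k := Nat.pow_pos (by norm_num)
    omega
  · -- m = l : then m = 3^k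
    subst h
    omega
  · -- l < m
    rcases lt_trichotomy m k with h2 | h2 | h2
    · exfalso
      have hA : (3:ℕ) ^ m * 3 ≤ 3 ^ k := by
        calc (3:ℕ)^m * 3 = 3 ^ (m+1) := (pow_succ 3 m).symm
        _ ≤ 3 ^ k := Nat.pow_le_pow_right (by norm_num) h2
      have h3 : m < 3 ^ m := Nat.lt_pow_self (by norm_num : 1 < 3)
      have h4 : 0 < 3 ^ l := Nat.pow_pos (by norm_num)
      omega
    · exfalso
      subst h2
      have h3 : m = 3 ^ l := by omega
      have h4 : 3 ^ l % 2 = 1 := by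
        rw [Nat.pow_mod]
        simp
      omega
    · exfalso
      have hA : (3:ℕ) ^ l * 3 ≤ 3 ^ m := by
        calc (3:ℕ)^l * 3 = 3 ^ (l+1) := (pow_succ 3 l).symm
        _ ≤ 3 ^ m := Nat.pow_le_pow_right (by norm_num) h
      have hB : (3:ℕ) ^ k * 3 ≤ 3 ^ m := by
        calc (3:ℕ)^k * 3 = 3 ^ (k+1) := (pow_succ 3 k).symm
        _ ≤ 3 ^ m := Nat.pow_le_pow_right (by norm_num) h2
      have h3 : 0 < 3 ^ l := Nat.pow_pos (by norm_num)
      have h4 : 0 < 3 ^ k := Nat.pow_pos (by norm_num)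
      omega

lemma eqAA {k m l : ℕ} (hk : 6 ≤ k) (hm : 1 ≤ m) (hl : 1 ≤ l)
    (heq : 3 ^ m + m + (3 ^ l + l) = 3 ^ k) : False := by
  have h3 : 0 < 3 ^ l := Nat.pow_pos (by norm_num)
  have h4 : 0 < 3 ^ m := Nat.pow_pos (by norm_num)
  have hmk : m < k := by
    have : (3:ℕ) ^ m < 3 ^ k := by omega
    exact (Nat.pow_lt_pow_iff_right (by norm_num)).1 this
  have hlk : l < k := by
    have : (3:ℕ) ^ l < 3 ^ k := by omega
    exact (Nat.pow_lt_pow_iff_right (by norm_num)).1 this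
  have e1 : (3:ℕ) ^ m ≤ 3 ^ (k-1) := Nat.pow_le_pow_right (by norm_num) (by omega)
  have e2 : (3:ℕ) ^ l ≤ 3 ^ (k-1) := Nat.pow_le_pow_right (by norm_num) (by omega)
  have e3 : (3:ℕ) ^ k = 3 ^ (k-1) * 3 := by
    rw [← pow_succ]
    congr 1
    omega
  have e4 : 2 * (k-1) < 3 ^ (k-1) := two_mul_lt_pow3 (by omega)
  omega

lemma keyPair {k : ℕ} (hk : 6 ≤ k) (hke : k % 2 = 0) {j : ℤ}
    (h1 : spikeA j ∨ spikeB j)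
    (h2 : spikeA (((3^k : ℕ) : ℤ) - j) ∨ spikeB (((3^k : ℕ) : ℤ) - j)) :
    j = ((3 ^ (3^k) + 3^k : ℕ) : ℤ) ∨ j = -((3 ^ (3^k) : ℕ) : ℤ) := by
  rcases h1 with ⟨m, hm, rfl⟩ | ⟨m, hm, rfl⟩
  · rcases h2 with ⟨e, he, hee⟩ | ⟨e, he, hee⟩
    · -- A, A : contradiction
      exfalso
      have heq : 3 ^ m + m + (3 ^ e + e) = 3 ^ k := by
        have : ((3 ^ m + m + (3 ^ e + e) : ℕ) : ℤ) = ((3^k : ℕ) : ℤ) := by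
          push_cast
          push_cast at hee
          linarith
        exact_mod_cast this
      exact eqAA hk hm he heq
    · -- A, B : canonical
      left
      have heq : 3 ^ m + m = 3 ^ k + 3 ^ e := by
        have : ((3 ^ m + m : ℕ) : ℤ) = ((3^k + 3^e : ℕ) : ℤ) := by
          push_cast
          push_cast at hee
          linarith
        exact_mod_cast this
      obtain ⟨hm3, -⟩ := eqAB hk hke hm he heq
      subst hm3
      push_cast
      ring
  · rcases h2 with ⟨e, he, hee⟩ | ⟨e, he, hee⟩
    · -- B, A : canonical
      right
      have heq : 3 ^ e + e = 3 ^ k + 3 ^ m := by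
        have : ((3 ^ e + e : ℕ) : ℤ) = ((3^k + 3^m : ℕ) : ℤ) := by
          push_cast
          push_cast at hee
          linarith
        exact_mod_cast this
      obtain ⟨he3, hme⟩ := eqAB hk hke he hm heq
      have : m = 3 ^ k := by omega
      subst this
      push_cast
      ring
    · -- B, B : impossible
      exfalso
      push_cast at hee
      have p1 : (1:ℤ) ≤ 3 ^ m := one_le_pow₀ (by norm_num)
      have p2 : (1:ℤ) ≤ 3 ^ e := one_le_pow₀ (by norm_num)
      have p3 : (1:ℤ) ≤ 3 ^ k := one_le_pow₀ (by norm_num)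
      linarith

lemma gapC1 {k : ℕ} (hk : 6 ≤ k) {j : ℤ} (hj : j.natAbs < k) :
    ¬ (spikeA (((3^k : ℕ) : ℤ) - j) ∨ spikeB (((3^k : ℕ) : ℤ) - j)) := by
  have hjb : -(k:ℤ) < j ∧ j < k := by omega
  rintro (⟨m, hm, hee⟩ | ⟨m, hm, hee⟩)
  · push_cast at hee
    rcases lt_or_ge m k with h | h
    · have e1 : (3:ℤ) ^ m ≤ 3 ^ (k-1) := pow_le_pow_right₀ (by norm_num) (by omega)
      have e3 : (3:ℤ) ^ k = 3 ^ (k-1) * 3 := by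
        rw [← pow_succ]
        congr 1
        omega
      have e4 : 2 * ((k:ℤ)-1) < 3 ^ (k-1) := by
        have := two_mul_lt_pow3 (show 1 ≤ k - 1 by omega)
        have : ((2 * (k-1) : ℕ) : ℤ) < ((3 ^ (k-1) : ℕ) : ℤ) := by exact_mod_cast this
        push_cast at this
        omega
      have hmk : (m:ℤ) ≤ (k:ℤ) - 1 := by omega
      linarith
    · have e1 : (3:ℤ) ^ k ≤ 3 ^ m := pow_le_pow_right₀ (by norm_num) h
      have e2 : (k:ℤ) ≤ m := by exact_mod_cast h
      linarith
  · push_cast at hee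
    have p1 : (1:ℤ) ≤ 3 ^ m := one_le_pow₀ (by norm_num)
    have p3 : (k:ℤ) ≤ 3 ^ k := by exact_mod_cast le_pow3 k
    linarith


lemma wfun_nonspike_le {k : ℕ} (hk1 : 1 ≤ k) {x : ℤ} (hx : ¬(spikeA x ∨ spikeB x))
    (hxk : k ≤ x.natAbs) :
    wfun x ≤ Real.exp (-((7 * 9 ^ (3^k) + 2 * x.natAbs : ℕ) : ℝ)) := by
  rw [wfun_nonspike hx]
  apply Real.exp_le_exp.2
  rw [neg_le_neg_iff]
  exact_mod_cast keyF hk1 hxk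

lemma mul_wfun_le {x y : ℤ} {P Q R : ℝ} (hx : wfun x ≤ Real.exp P) (hy : wfun y ≤ Real.exp Q)
    (hPQ : P + Q ≤ R) : wfun x * wfun y ≤ Real.exp R := by
  calc wfun x * wfun y ≤ Real.exp P * Real.exp Q :=
        mul_le_mul hx hy (wfun_pos y).le (Real.exp_pos P).le
  _ = Real.exp (P+Q) := (Real.exp_add P Q).symm
  _ ≤ Real.exp R := Real.exp_le_exp.2 hPQ

lemma wfun_le_exp_zero (x : ℤ) : wfun x ≤ Real.exp 0 := by
  rw [Real.exp_zero]; exact wfun_le_one x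

/-- The key pointwise bound on non-canonical terms of the convolution at `z = 3^k`. -/
lemma pointwise {k : ℕ} (hk : 6 ≤ k) (hke : k % 2 = 0) {j : ℤ}
    (hj1 : j ≠ ((3 ^ (3^k) + 3^k : ℕ) : ℤ)) (hj2 : j ≠ -((3 ^ (3^k) : ℕ) : ℤ)) :
    wfun j * wfun (((3^k : ℕ) : ℤ) - j) ≤
      Real.exp (-((3 * 9 ^ (3^k) : ℕ) : ℝ)) * Real.exp (-1) ^ j.natAbs := by
  rw [exp_pow_natAbs, ← Real.exp_add]
  set z : ℤ := ((3^k : ℕ) : ℤ) with hz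
  have hsub : z - (z - j) = j := by ring
  have hpos9 : 0 < 9 ^ (3^k) := Nat.pow_pos (by norm_num)
  have hk9 : k ≤ 9 ^ (3^k) := by
    calc k ≤ 3 ^ k := le_pow3 k
    _ ≤ 9 ^ k := Nat.pow_le_pow_left (by norm_num) k
    _ ≤ 9 ^ (3 ^ k) := Nat.pow_le_pow_right (by norm_num) (le_pow3 k)
  by_cases hs : spikeA j ∨ spikeB j
  · -- j is a spike; then z - j is not, and is at distance ≥ k from 0
    have hnsp : ¬(spikeA (z - j) ∨ spikeB (z - j)) := by
      intro h2
      rcases keyPair hk hke hs h2 with h | h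
      · exact hj1 h
      · exact hj2 h
    have habs : k ≤ (z - j).natAbs := by
      by_contra hcon
      push_neg at hcon
      have := gapC1 hk hcon
      rw [hsub] at this
      exact this hs
    refine mul_wfun_le (wfun_le_exp_neg_natAbs j) (wfun_nonspike_le (by omega) hnsp habs) ?_
    have hnat : 3 * 9 ^ (3^k) ≤ 7 * 9 ^ (3^k) + 2 * (z - j).natAbs := by omega
    have : ((3 * 9 ^ (3^k) : ℕ) : ℝ) ≤ ((7 * 9 ^ (3^k) + 2 * (z - j).natAbs : ℕ) : ℝ) := by
      exact_mod_cast hnat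
    linarith
  · by_cases hjk : j.natAbs < k
    · -- j small and nonspike; z - j nonspike and large
      have hnsp : ¬(spikeA (z - j) ∨ spikeB (z - j)) := gapC1 hk hjk
      have habs : k ≤ (z - j).natAbs := by
        have hp : 2 * k ≤ 3 ^ k := (two_mul_lt_pow3 (by omega)).le
        omega
      refine mul_wfun_le (wfun_le_exp_zero j) (wfun_nonspike_le (by omega) hnsp habs) ?_
      have hnat : 3 * 9 ^ (3^k) + j.natAbs ≤ 7 * 9 ^ (3^k) + 2 * (z - j).natAbs := by omega
      have : ((3 * 9 ^ (3^k) + j.natAbs : ℕ) : ℝ) ≤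
          ((7 * 9 ^ (3^k) + 2 * (z - j).natAbs : ℕ) : ℝ) := by exact_mod_cast hnat
      push_cast at this ⊢
      linarith
    · -- j large and nonspike
      push_neg at hjk
      refine mul_wfun_le (wfun_nonspike_le (by omega) hs hjk) (wfun_le_exp_zero (z - j)) ?_
      have hnat : 3 * 9 ^ (3^k) + j.natAbs ≤ 7 * 9 ^ (3^k) + 2 * j.natAbs := by omega
      have : ((3 * 9 ^ (3^k) + j.natAbs : ℕ) : ℝ) ≤
          ((7 * 9 ^ (3^k) + 2 * j.natAbs : ℕ) : ℝ) := by exact_mod_cast hnat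
      push_cast at this ⊢
      linarith


lemma exp_a_bound {a : ℝ} (ha : 0 < a) (j : ℤ) :
    Real.exp (a * |(j:ℝ)|) * wfun j ≤ Real.exp ((a+1)^2) * Real.exp (-1) ^ j.natAbs := by
  rw [exp_pow_natAbs, ← Real.exp_add]
  have habs : |(j:ℝ)| = (j.natAbs : ℝ) := by
    rw [Nat.cast_natAbs, Int.cast_abs]
  set T : ℝ := (j.natAbs : ℝ) with hT
  have hT0 : 0 ≤ T := Nat.cast_nonneg _
  have h1 : wfun j ≤ Real.exp (-T^2) := by
    have := wfun_le_exp_neg_sq j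
    rwa [← cast_sq_natAbs j, show ((j.natAbs^2 : ℕ):ℝ) = T^2 by push_cast; ring] at this
  calc Real.exp (a * |(j:ℝ)|) * wfun j ≤ Real.exp (a * T) * Real.exp (-T^2) := by
        rw [habs]
        exact mul_le_mul_of_nonneg_left h1 (Real.exp_pos _).le
  _ = Real.exp (a*T - T^2) := by rw [← Real.exp_add]; ring_nf
  _ ≤ Real.exp ((a+1)^2 + -T) := by
      apply Real.exp_le_exp.2
      nlinarith [sq_nonneg (T - (a+1))]

lemma nine_pow (n : ℕ) : (9:ℕ) ^ n = (3 ^ n) ^ 2 := by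
  rw [show (9:ℕ) = 3^2 by norm_num, ← pow_mul, mul_comm, pow_mul]

lemma pCtr_mul (x y : ℤ) : pCtr x * pCtr y = (wfun x * wfun y) * (Zw⁻¹ * Zw⁻¹) := by
  simp only [pCtr, div_eq_mul_inv]; ring


end Sec72

open Sec72

theorem section_7_2_counterexample :
    Summable wfun ∧
    (∀ x : ℤ, 0 < pCtr x) ∧
    (∑' x : ℤ, pCtr x) = 1 ∧
    (∀ x : ℤ, pCtr x ≤ Zw⁻¹ * Real.exp (-(x : ℝ) ^ 2)) ∧
    (∀ a c C : ℝ, 0 < a → 0 < c → 0 < C →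
      ∃ z : ℤ,
        0 < (∑' k : ℤ, pCtr k * pCtr (z - k)) ∧
        C * Real.exp (c * (z : ℝ) ^ 2) ≤
          (∑' k : ℤ, Real.exp (a * |(k : ℝ)|) * pCtr k * pCtr (z - k)) /
            (∑' k : ℤ, pCtr k * pCtr (z - k))) := by
  refine ⟨summable_wfun, pCtr_pos, tsum_pCtr, pCtr_le, ?_⟩
  intro a c C ha hc hC
  -- choice of the even exponent k
  obtain ⟨K, hK⟩ := exists_nat_ge ((c + max (Real.log (5*C)) 0 + 1)/a)
  set k : ℕ := 2*K + 6 with hkdef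
  have hk : 6 ≤ k := by omega
  have hke : k % 2 = 0 := by omega
  have hak : c + max (Real.log (5*C)) 0 + 1 ≤ a * k := by
    rw [div_le_iff₀ ha] at hK
    have hKk : (K:ℝ) ≤ (k:ℝ) := by exact_mod_cast (by omega : K ≤ k)
    nlinarith
  obtain ⟨n, hn⟩ : ∃ n : ℕ, n = 3^k := ⟨_, rfl⟩
  have hn1 : 1 ≤ n := by rw [hn]; exact Nat.one_le_pow _ _ (by norm_num)
  have hn4 : 4 ≤ n := by
    have : (3:ℕ)^6 ≤ 3^k := Nat.pow_le_pow_right (by norm_num) hk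
    norm_num at this
    omega
  obtain ⟨z, hzdef⟩ : ∃ z : ℤ, z = ((n : ℕ) : ℤ) := ⟨_, rfl⟩
  obtain ⟨c₁, hc1def⟩ : ∃ x : ℤ, x = ((3^n + n : ℕ) : ℤ) := ⟨_, rfl⟩
  obtain ⟨c₂, hc2def⟩ : ∃ x : ℤ, x = -((3^n : ℕ) : ℤ) := ⟨_, rfl⟩
  have hc1spike : spikeA c₁ ∨ spikeB c₁ := Or.inl ⟨n, hn1, by rw [hc1def]; push_cast; ring⟩
  have hc2spike : spikeA c₂ ∨ spikeB c₂ := Or.inr ⟨n, hn1, by rw [hc2def]; push_cast; ring⟩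
  have hzc₁ : z - c₁ = c₂ := by rw [hzdef, hc1def, hc2def]; push_cast; ring
  have hzc₂ : z - c₂ = c₁ := by rw [hzdef, hc1def, hc2def]; push_cast; ring
  have hp3n : 1 ≤ 3^n := Nat.one_le_pow _ _ (by norm_num)
  have hne : c₁ ≠ c₂ := by
    rw [hc1def, hc2def]
    omega
  set E : ℕ := (3^n + n)^2 + 9^n with hEdef
  have hEle : E ≤ 3 * 9^n := lemG hn4
  set T : ℝ := Real.exp (-(E:ℝ)) with hTdef
  have hT0 : 0 < T := Real.exp_pos _
  have hZ : 0 < Zw⁻¹ * Zw⁻¹ := mul_pos (inv_pos.2 Zw_pos) (inv_pos.2 Zw_pos)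
  have hval : wfun c₁ * wfun c₂ = T := by
    rw [wfun_spike hc1spike, wfun_spike hc2spike, ← Real.exp_add]
    congr 1
    simp only [hEdef, hc1def, hc2def, nine_pow]
    push_cast
    ring
  have hgval : pCtr c₁ * pCtr c₂ = T * (Zw⁻¹ * Zw⁻¹) := by
    rw [pCtr_mul, hval]
  -- summability of the convolution terms
  have hgeo : Summable (fun j : ℤ => Real.exp (-1) ^ j.natAbs) :=
    summable_geom_int (Real.exp_pos _).le exp_neg_one_lt
  have hg_nonneg : ∀ j : ℤ, 0 ≤ pCtr j * pCtr (z - j) :=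
    fun j => mul_nonneg (pCtr_pos _).le (pCtr_pos _).le
  have hw2 : ∀ x y : ℤ, wfun x * wfun y ≤ Real.exp (-1) ^ x.natAbs := by
    intro x y
    calc wfun x * wfun y ≤ Real.exp (-(x.natAbs:ℝ)) * 1 :=
          mul_le_mul (wfun_le_exp_neg_natAbs x) (wfun_le_one y) (wfun_pos y).le
            (Real.exp_pos _).le
    _ = Real.exp (-1) ^ x.natAbs := by rw [mul_one, exp_pow_natAbs]
  have hgsum : Summable (fun j : ℤ => pCtr j * pCtr (z - j)) := by
    refine Summable.of_nonneg_of_le hg_nonneg (fun j => ?_) (hgeo.mul_left (Zw⁻¹ * Zw⁻¹))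
    rw [pCtr_mul]
    calc wfun j * wfun (z-j) * (Zw⁻¹ * Zw⁻¹) ≤ Real.exp (-1) ^ j.natAbs * (Zw⁻¹ * Zw⁻¹) :=
          mul_le_mul_of_nonneg_right (hw2 j (z-j)) hZ.le
    _ = (Zw⁻¹ * Zw⁻¹) * Real.exp (-1) ^ j.natAbs := by ring
  -- positivity of the denominator
  have hgc₁pos : 0 < pCtr c₁ * pCtr (z - c₁) := mul_pos (pCtr_pos _) (pCtr_pos _)
  have hDpos : 0 < (∑' j : ℤ, pCtr j * pCtr (z - j)) :=
    Summable.tsum_pos hgsum hg_nonneg c₁ hgc₁pos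
  refine ⟨z, hDpos, ?_⟩
  -- numerator: summability and lower bound
  have hf_nonneg : ∀ j : ℤ, 0 ≤ Real.exp (a * |(j : ℝ)|) * pCtr j * pCtr (z - j) :=
    fun j => mul_nonneg (mul_nonneg (Real.exp_pos _).le (pCtr_pos _).le) (pCtr_pos _).le
  have hfsum : Summable (fun j : ℤ => Real.exp (a * |(j : ℝ)|) * pCtr j * pCtr (z - j)) := by
    refine Summable.of_nonneg_of_le hf_nonneg (fun j => ?_)
      (hgeo.mul_left (Real.exp ((a+1)^2) * (Zw⁻¹ * Zw⁻¹)))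
    have he : Real.exp (a * |(j : ℝ)|) * pCtr j * pCtr (z - j)
        = (Real.exp (a * |(j : ℝ)|) * wfun j) * wfun (z-j) * (Zw⁻¹ * Zw⁻¹) := by
      simp only [pCtr, div_eq_mul_inv]; ring
    rw [he]
    calc (Real.exp (a * |(j : ℝ)|) * wfun j) * wfun (z-j) * (Zw⁻¹ * Zw⁻¹)
        ≤ (Real.exp ((a+1)^2) * Real.exp (-1) ^ j.natAbs) * 1 * (Zw⁻¹ * Zw⁻¹) := by
          apply mul_le_mul_of_nonneg_right _ hZ.le
          apply mul_le_mul (exp_a_bound ha j) (wfun_le_one _) (wfun_pos _).le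
          positivity
    _ = Real.exp ((a+1)^2) * (Zw⁻¹ * Zw⁻¹) * Real.exp (-1) ^ j.natAbs := by ring
  have hNlow : Real.exp (a * ((3^n + n : ℕ) : ℝ)) * (T * (Zw⁻¹ * Zw⁻¹))
      ≤ (∑' j : ℤ, Real.exp (a * |(j : ℝ)|) * pCtr j * pCtr (z - j)) := by
    have h := Summable.le_tsum hfsum c₁ (fun j _ => hf_nonneg j)
    have hc1abs : |(c₁ : ℝ)| = ((3^n + n : ℕ) : ℝ) := by
      rw [hc1def]
      push_cast
      rw [abs_of_nonneg]
      positivity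
    rw [hzc₁] at h
    calc Real.exp (a * ((3^n + n : ℕ) : ℝ)) * (T * (Zw⁻¹ * Zw⁻¹))
        = Real.exp (a * |(c₁ : ℝ)|) * pCtr c₁ * pCtr c₂ := by
          rw [hc1abs, mul_assoc, hgval]
    _ ≤ _ := h
  -- denominator upper bound via the two canonical points plus tails
  set u : ℤ → ℝ := fun j => if j = c₁ ∨ j = c₂ then pCtr j * pCtr (z - j) else 0 with hudef
  set v : ℤ → ℝ := fun j => (T * (Zw⁻¹ * Zw⁻¹)) * Real.exp (-1) ^ j.natAbs with hvdef
  have husupp : ∀ b ∉ ({c₁, c₂} : Finset ℤ), u b = 0 := by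
    intro b hb
    simp only [Finset.mem_insert, Finset.mem_singleton] at hb
    push_neg at hb
    simp only [hudef]
    rw [if_neg (by  tauto)]
  have husum : Summable u := summable_of_ne_finset_zero husupp
  have hvsum : Summable v := hgeo.mul_left _
  have hv_nonneg : ∀ j, 0 ≤ v j := by
    intro j
    simp only [hvdef]
    positivity
  have hguv : ∀ j : ℤ, pCtr j * pCtr (z - j) ≤ u j + v j := by
    intro j
    by_cases hj : j = c₁ ∨ j = c₂
    · simp only [hudef]
      rw [if_pos hj]
      have := hv_nonneg j
      linarith
    · push_neg at hj
      simp only [hudef]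
      rw [if_neg (by tauto)]
      have hpw := pointwise hk hke (j := j) (by rw [← hn, ← hc1def]; exact hj.1)
        (by rw [← hn, ← hc2def]; exact hj.2)
      rw [← hn, ← hzdef] at hpw
      have hE3 : Real.exp (-((3 * 9 ^ n : ℕ) : ℝ)) ≤ T := by
        apply Real.exp_le_exp.2
        rw [neg_le_neg_iff]
        exact_mod_cast hEle
      rw [pCtr_mul]
      have h2 : wfun j * wfun (z - j) ≤ T * Real.exp (-1) ^ j.natAbs := by
        refine hpw.trans ?_
        exact mul_le_mul_of_nonneg_right hE3 (pow_nonneg (Real.exp_pos _).le _)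
      calc wfun j * wfun (z-j) * (Zw⁻¹ * Zw⁻¹)
          ≤ (T * Real.exp (-1) ^ j.natAbs) * (Zw⁻¹ * Zw⁻¹) :=
            mul_le_mul_of_nonneg_right h2 hZ.le
      _ = 0 + v j := by simp only [hvdef]; ring
  have hDle : (∑' j : ℤ, pCtr j * pCtr (z - j)) ≤ 5 * (T * (Zw⁻¹ * Zw⁻¹)) := by
    have h1 : (∑' j : ℤ, pCtr j * pCtr (z - j)) ≤ ∑' j : ℤ, (u j + v j) :=
      Summable.tsum_le_tsum hguv hgsum (husum.add hvsum)
    have h2 : (∑' j : ℤ, (u j + v j)) = (∑' j, u j) + (∑' j, v j) := Summable.tsum_add husum hvsum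
    have h3 : (∑' j, u j) = 2 * (T * (Zw⁻¹ * Zw⁻¹)) := by
      rw [tsum_eq_sum husupp, Finset.sum_pair hne]
      have e1 : u c₁ = pCtr c₁ * pCtr c₂ := by
        simp only [hudef]
        rw [if_pos (Or.inl trivial), hzc₁]
      have e2 : u c₂ = pCtr c₂ * pCtr c₁ := by
        simp only [hudef]
        rw [if_pos (Or.inr trivial), hzc₂]
      have e3 : pCtr c₂ * pCtr c₁ = T * (Zw⁻¹ * Zw⁻¹) := by rw [← hgval]; ring
      rw [e1, e2, e3, hgval]
      ring
    have h4 : (∑' j, v j) ≤ 3 * (T * (Zw⁻¹ * Zw⁻¹)) := by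
      simp only [hvdef]
      rw [tsum_mul_left]
      calc (T * (Zw⁻¹ * Zw⁻¹)) * (∑' j : ℤ, Real.exp (-1) ^ j.natAbs)
          ≤ (T * (Zw⁻¹ * Zw⁻¹)) * 3 :=
            mul_le_mul_of_nonneg_left tsum_geom_int_le_three (by positivity)
      _ = 3 * (T * (Zw⁻¹ * Zw⁻¹)) := by ring
    linarith
  -- final comparison
  rw [le_div_iff₀ hDpos]
  have hz2 : (z:ℝ)^2 = ((9^k : ℕ) : ℝ) := by
    rw [hzdef, hn, nine_pow k]
    push_cast
    ring
  have hkey : 5 * C * Real.exp (c * (z:ℝ)^2) ≤ Real.exp (a * ((3^n + n : ℕ) : ℝ)) := by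
    have h5C : (5:ℝ) * C = Real.exp (Real.log (5*C)) := by
      rw [Real.exp_log (by linarith)]
    have hrange : Real.log (5*C) + c * (z:ℝ)^2 ≤ a * ((3^n + n : ℕ) : ℝ) := by
      rw [hz2]
      set X : ℝ := ((9^k : ℕ) : ℝ) with hXdef
      set L : ℝ := max (Real.log (5*C)) 0 with hLdef
      have hX1 : (1:ℝ) ≤ X := by
        rw [hXdef]
        exact_mod_cast Nat.one_le_pow _ _ (by norm_num)
      have hmn : (k:ℝ) * X ≤ ((3^n : ℕ):ℝ) := by
        rw [hXdef, hn]
        exact_mod_cast mul_nine_le (show 1 ≤ k by omega)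
      have hlogle : Real.log (5*C) ≤ L := le_max_left _ _
      have hmax0 : 0 ≤ L := le_max_right _ _
      have hcast : ((3^n:ℕ):ℝ) ≤ ((3^n + n:ℕ):ℝ) := by
        exact_mod_cast Nat.le_add_right _ _
      have hX0 : (0:ℝ) ≤ X := by linarith
      nlinarith [mul_le_mul_of_nonneg_left hmn ha.le,
        mul_le_mul_of_nonneg_left hcast ha.le,
        mul_le_mul_of_nonneg_right hak hX0,
        mul_nonneg (show (0:ℝ) ≤ L + 1 by linarith) (show (0:ℝ) ≤ X - 1 by linarith)]
    calc 5 * C * Real.exp (c * (z:ℝ)^2) = Real.exp (Real.log (5*C) + c*(z:ℝ)^2) := by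
          rw [Real.exp_add, ← h5C]
    _ ≤ _ := Real.exp_le_exp.2 hrange
  calc C * Real.exp (c * (z:ℝ)^2) * (∑' j : ℤ, pCtr j * pCtr (z - j))
      ≤ C * Real.exp (c*(z:ℝ)^2) * (5 * (T * (Zw⁻¹*Zw⁻¹))) := by
        apply mul_le_mul_of_nonneg_left hDle (by positivity)
  _ = (5 * C * Real.exp (c*(z:ℝ)^2)) * (T * (Zw⁻¹*Zw⁻¹)) := by ring
  _ ≤ Real.exp (a * ((3^n+n:ℕ):ℝ)) * (T * (Zw⁻¹*Zw⁻¹)) :=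
      mul_le_mul_of_nonneg_right hkey (by positivity)
  _ ≤ _ := hNlow
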